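/- Let |ψ⟩ ∈ A ⊗ B be a unit vector with reduced state ψ^A = tr_B(|ψ⟩⟨ψ|), and let ρ ∈ Pos(A) satisfy ρ ≤ ψ^A. Then there exists P ∈ Pos(B) with P ≤ I^B such that tr_B[(I ⊗ P)|ψ⟩⟨ψ|(I ⊗ P)] = ρ. -/

import Mathlib

open Matrix Kronecker
open scoped ComplexOrder

noncomputable def traceNorm {n m : Type*} [Fintype n] [Fintype m] [DecidableEq m]
    (M : Matrix n m ℂ) : ℝ :=
  (((Matrix.posSemidef_conjTranspose_mul_self M).1.eigenvectorUnitary.1 *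
      Matrix.diagonal (((↑) : ℝ → ℂ) ∘ (Real.sqrt ∘ (Matrix.posSemidef_conjTranspose_mul_self M).1.eigenvalues)) *
      (star (Matrix.posSemidef_conjTranspose_mul_self M).1.eigenvectorUnitary : Matrix m m ℂ)).trace).re

noncomputable def ptraceFst {a b : Type*} [Fintype a]
    (M : Matrix (a × b) (a × b) ℂ) : Matrix b b ℂ :=
  Matrix.of fun i j => ∑ k, M (k, i) (k, j)

noncomputable def ptraceSnd {a b : Type*} [Fintype b]
    (M : Matrix (a × b) (a × b) ℂ) : Matrix a a ℂ :=
  Matrix.of fun i j => ∑ k, M (i, k) (j, k)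

namespace MeasAux

variable {n : Type*} [Fintype n] [DecidableEq n] {S : Matrix n n ℂ}

noncomputable def mfun (hS : S.IsHermitian) (f : ℝ → ℝ) : Matrix n n ℂ :=
  (hS.eigenvectorUnitary : Matrix n n ℂ) *
    Matrix.diagonal (fun i => ((f (hS.eigenvalues i) : ℝ) : ℂ)) *
    (star hS.eigenvectorUnitary : Matrix n n ℂ)

lemma mfun_mul (hS : S.IsHermitian) (f g : ℝ → ℝ) :
    mfun hS f * mfun hS g = mfun hS (fun x => f x * g x) := by
  have h : (star hS.eigenvectorUnitary : Matrix n n ℂ) *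
      (hS.eigenvectorUnitary : Matrix n n ℂ) = 1 := Unitary.coe_star_mul_self _
  unfold mfun
  simp only [Matrix.mul_assoc]
  rw [← Matrix.mul_assoc (star hS.eigenvectorUnitary : Matrix n n ℂ)
      (hS.eigenvectorUnitary : Matrix n n ℂ), h, Matrix.one_mul,
      ← Matrix.mul_assoc (Matrix.diagonal _) (Matrix.diagonal _), Matrix.diagonal_mul_diagonal]
  push_cast
  rfl

lemma mfun_congr (hS : S.IsHermitian) {f g : ℝ → ℝ}
    (h : ∀ i, f (hS.eigenvalues i) = g (hS.eigenvalues i)) : mfun hS f = mfun hS g := by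
  unfold mfun
  rw [show (fun i => ((f (hS.eigenvalues i) : ℝ) : ℂ))
      = (fun i => ((g (hS.eigenvalues i) : ℝ) : ℂ)) from funext fun i => by rw [h i]]

lemma mfun_id (hS : S.IsHermitian) : mfun hS (fun x => x) = S := by
  conv_rhs => rw [hS.spectral_theorem]
  rfl

lemma mfun_one (hS : S.IsHermitian) : mfun hS (fun _ => 1) = 1 := by
  unfold mfun
  have : (Matrix.diagonal (fun _ : n => ((1 : ℝ) : ℂ))) = 1 := by
    simp
  rw [this, Matrix.mul_one]
  exact Unitary.coe_mul_star_self _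

lemma mfun_sub (hS : S.IsHermitian) (f g : ℝ → ℝ) :
    mfun hS (fun x => f x - g x) = mfun hS f - mfun hS g := by
  have hd : (Matrix.diagonal (fun i => ((f (hS.eigenvalues i) - g (hS.eigenvalues i) : ℝ) : ℂ)))
      = Matrix.diagonal (fun i => ((f (hS.eigenvalues i) : ℝ) : ℂ))
        - Matrix.diagonal (fun i => ((g (hS.eigenvalues i) : ℝ) : ℂ)) := by
    ext i j
    by_cases hij : i = j <;> simp [hij, Matrix.diagonal_apply, Complex.ofReal_sub]
  unfold mfun
  rw [hd, Matrix.mul_sub, Matrix.sub_mul]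

lemma mfun_posSemidef (hS : S.IsHermitian) (f : ℝ → ℝ)
    (h : ∀ i, 0 ≤ f (hS.eigenvalues i)) : (mfun hS f).PosSemidef := by
  have hd : (Matrix.diagonal (fun i => ((f (hS.eigenvalues i) : ℝ) : ℂ))).PosSemidef :=
    Matrix.posSemidef_diagonal_iff.mpr fun i => by exact_mod_cast h i
  have := hd.mul_mul_conjTranspose_same (hS.eigenvectorUnitary : Matrix n n ℂ)
  simpa [mfun, Matrix.star_eq_conjTranspose] using this

lemma eigenvalues_le_one {X : Matrix n n ℂ} (hX : X.IsHermitian)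
    (h1 : ((1 : Matrix n n ℂ) - X).PosSemidef) (i : n) : hX.eigenvalues i ≤ 1 := by
  have h0 := h1.re_dotProduct_nonneg ⇑(hX.eigenvectorBasis i)
  rw [Matrix.sub_mulVec, Matrix.one_mulVec, dotProduct_sub, map_sub] at h0
  have h2 : RCLike.re (dotProduct (star ⇑(hX.eigenvectorBasis i))
      ⇑(hX.eigenvectorBasis i)) = 1 := by
    rw [dotProduct_comm]
    simp only [← EuclideanSpace.inner_eq_star_dotProduct, inner_self_eq_norm_sq_to_K,
      hX.eigenvectorBasis.orthonormal.1 i]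
    norm_num
  rw [h2, ← hX.eigenvalues_eq i] at h0
  linarith

lemma exists_sqrt_le_one {X : Matrix n n ℂ} (hX : X.PosSemidef)
    (h1 : ((1 : Matrix n n ℂ) - X).PosSemidef) :
    ∃ P : Matrix n n ℂ, P.PosSemidef ∧ ((1 : Matrix n n ℂ) - P).PosSemidef ∧ P * P = X := by
  refine ⟨mfun hX.1 Real.sqrt, mfun_posSemidef _ _ (fun i => Real.sqrt_nonneg _), ?_, ?_⟩
  · have e : (1 : Matrix n n ℂ) - mfun hX.1 Real.sqrt
        = mfun hX.1 (fun x => 1 - Real.sqrt x) := by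
      rw [mfun_sub, mfun_one]
    rw [e]
    refine mfun_posSemidef _ _ (fun i => ?_)
    have := Real.sqrt_le_one.mpr (eigenvalues_le_one hX.1 h1 i)
    linarith
  · rw [mfun_mul, mfun_congr hX.1 (g := fun x => x)
      (fun i => Real.mul_self_sqrt (hX.eigenvalues_nonneg i)), mfun_id]

/-- Moore–Penrose style pseudoinverse of a positive semidefinite matrix. -/
noncomputable def pinv (hS : S.PosSemidef) : Matrix n n ℂ :=
  mfun hS.1 (fun x => if x = 0 then 0 else x⁻¹)

lemma pinv_posSemidef (hS : S.PosSemidef) : (pinv hS).PosSemidef := by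
  refine mfun_posSemidef _ _ (fun i => ?_)
  by_cases h : hS.1.eigenvalues i = 0
  · simp [h]
  · simp [h, inv_nonneg.mpr (hS.eigenvalues_nonneg i)]

lemma mul_pinv_mul (hS : S.PosSemidef) : S * pinv hS * S = S := by
  have h : mfun hS.1 (fun x => x) * mfun hS.1 (fun x => if x = 0 then 0 else x⁻¹) *
      mfun hS.1 (fun x => x) = mfun hS.1 (fun x => x) := by
    rw [mfun_mul, mfun_mul]
    refine mfun_congr _ (fun i => ?_)
    by_cases h : hS.1.eigenvalues i = 0
    · simp [h]
    · rw [if_neg h]; field_simp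
  rwa [mfun_id] at h

lemma pinv_mul_pinv (hS : S.PosSemidef) : pinv hS * S * pinv hS = pinv hS := by
  have h : mfun hS.1 (fun x => if x = 0 then 0 else x⁻¹) * mfun hS.1 (fun x => x) *
      mfun hS.1 (fun x => if x = 0 then 0 else x⁻¹)
      = mfun hS.1 (fun x => if x = 0 then 0 else x⁻¹) := by
    rw [mfun_mul, mfun_mul]
    refine mfun_congr _ (fun i => ?_)
    by_cases h : hS.1.eigenvalues i = 0
    · simp [h]
    · rw [if_neg h]; field_simp
  rwa [mfun_id] at h

lemma pinv_comm (hS : S.PosSemidef) : pinv hS * S = S * pinv hS := by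
  have h : mfun hS.1 (fun x => if x = 0 then 0 else x⁻¹) * mfun hS.1 (fun x => x)
      = mfun hS.1 (fun x => x) * mfun hS.1 (fun x => if x = 0 then 0 else x⁻¹) := by
    rw [mfun_mul, mfun_mul]
    exact mfun_congr _ (fun i => mul_comm _ _)
  rwa [mfun_id] at h

lemma mul_pinv_posSemidef (hS : S.PosSemidef) : (S * pinv hS).PosSemidef := by
  have h : (mfun hS.1 (fun x => x) * mfun hS.1 (fun x => if x = 0 then 0 else x⁻¹)).PosSemidef := by
    rw [mfun_mul]
    refine mfun_posSemidef _ _ (fun i => ?_)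
    by_cases h : hS.1.eigenvalues i = 0
    · simp [h]
    · exact mul_nonneg (hS.eigenvalues_nonneg i) (by simp [h, inv_nonneg.mpr (hS.eigenvalues_nonneg i)])
  rwa [mfun_id] at h

end MeasAux

lemma ptraceSnd_vecMulVec {a b : Type*} [Fintype a] [Fintype b]
    (ψ : (a × b) → ℂ) :
    ptraceSnd (Matrix.vecMulVec ψ (fun p => (starRingEnd ℂ) (ψ p)))
      = (Matrix.of fun i k => ψ (i, k)) * (Matrix.of fun i k => ψ (i, k))ᴴ := by
  ext i j
  simp only [ptraceSnd, Matrix.of_apply, Matrix.vecMulVec_apply, Matrix.mul_apply,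
    Matrix.conjTranspose_apply, starRingEnd_apply]

lemma ptrace_kron_vecMulVec {a b : Type*} [Fintype a] [Fintype b] [DecidableEq a] [DecidableEq b]
    (ψ : (a × b) → ℂ) (P : Matrix b b ℂ) :
    ptraceSnd (((1 : Matrix a a ℂ) ⊗ₖ P) *
        Matrix.vecMulVec ψ (fun p => (starRingEnd ℂ) (ψ p)) *
        ((1 : Matrix a a ℂ) ⊗ₖ P))
    = (Matrix.of fun i k => ψ (i, k)) * (P * P)ᵀ * (Matrix.of fun i k => ψ (i, k))ᴴ := by
  ext i j
  simp only [ptraceSnd, Matrix.of_apply, Matrix.mul_apply, Matrix.kroneckerMap_apply,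
    Matrix.vecMulVec_apply, Fintype.sum_prod_type, Matrix.one_apply, ite_mul, one_mul, zero_mul,
    mul_ite, mul_zero, mul_one, Finset.sum_ite_eq, Finset.sum_ite_eq', Finset.mem_univ, if_true,
    Matrix.conjTranspose_apply, Matrix.transpose_apply, Finset.sum_mul, Finset.mul_sum]
  simp only [Finset.sum_ite_irrel, Finset.sum_const_zero, Finset.sum_ite_eq,
    Finset.sum_ite_eq', Finset.mem_univ, if_true, starRingEnd_apply]
  rw [Finset.sum_comm]
  refine Finset.sum_congr rfl fun x _ => ?_
  rw [Finset.sum_comm]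
  exact Finset.sum_congr rfl fun y _ => Finset.sum_congr rfl fun z _ => by ring

/-- If `ρ ≤ ψ^A` then there is `0 ≤ P ≤ I` on `B` with
`tr_B[(I ⊗ P)|ψ⟩⟨ψ|(I ⊗ P)] = ρ`. -/
theorem exists_measurement_op_ptrace_eq
    {a b : Type*} [Fintype a] [Fintype b] [DecidableEq a] [DecidableEq b]
    (ψ : EuclideanSpace ℂ (a × b)) (hψ : ‖ψ‖ = 1)
    (ρ : Matrix a a ℂ) (hρ : ρ.PosSemidef)
    (hle : (ptraceSnd (Matrix.vecMulVec (fun p => ψ p) (fun p => (starRingEnd ℂ) (ψ p))) -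
      ρ).PosSemidef) :
    ∃ P : Matrix b b ℂ, P.PosSemidef ∧ ((1 : Matrix b b ℂ) - P).PosSemidef ∧
      ptraceSnd (((1 : Matrix a a ℂ) ⊗ₖ P) *
        Matrix.vecMulVec (fun p => ψ p) (fun p => (starRingEnd ℂ) (ψ p)) *
        ((1 : Matrix a a ℂ) ⊗ₖ P)) = ρ := by
  classical
  obtain ⟨M, hMdef⟩ : ∃ M' : Matrix a b ℂ, M' = Matrix.of fun i k => (ψ : (a × b) → ℂ) (i, k) :=
    ⟨_, rfl⟩
  have hσ_eq : ptraceSnd (Matrix.vecMulVec (fun p => ψ p) (fun p => (starRingEnd ℂ) (ψ p)))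
      = M * Mᴴ := by
    rw [ptraceSnd_vecMulVec (fun p => ψ p), ← hMdef]
  have hσ : (M * Mᴴ).PosSemidef := Matrix.posSemidef_self_mul_conjTranspose M
  have hle' : (M * Mᴴ - ρ).PosSemidef := by rwa [hσ_eq] at hle
  obtain ⟨N, hNdef⟩ : ∃ N', N' = MeasAux.pinv hσ := ⟨_, rfl⟩
  have hNpsd : N.PosSemidef := hNdef ▸ MeasAux.pinv_posSemidef hσ
  have i1 : M * Mᴴ * N * (M * Mᴴ) = M * Mᴴ := hNdef ▸ MeasAux.mul_pinv_mul hσ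
  have i2 : N * (M * Mᴴ) * N = N := hNdef ▸ MeasAux.pinv_mul_pinv hσ
  have i3 : N * (M * Mᴴ) = M * Mᴴ * N := hNdef ▸ MeasAux.pinv_comm hσ
  have hPipsd : (M * Mᴴ * N).PosSemidef := hNdef ▸ MeasAux.mul_pinv_posSemidef hσ
  have hPiH : (M * Mᴴ * N).IsHermitian := hPipsd.1
  have hTH : ((1 : Matrix a a ℂ) - M * Mᴴ * N).IsHermitian := Matrix.isHermitian_one.sub hPiH
  have hTσ : ((1 : Matrix a a ℂ) - M * Mᴴ * N) * (M * Mᴴ) = 0 := by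
    rw [Matrix.sub_mul, Matrix.one_mul, i1, sub_self]
  -- T * ρ * T = 0
  have hTρT : ((1 : Matrix a a ℂ) - M * Mᴴ * N) * ρ * ((1 : Matrix a a ℂ) - M * Mᴴ * N) = 0 := by
    obtain ⟨T, hTdef⟩ : ∃ T', T' = (1 : Matrix a a ℂ) - M * Mᴴ * N := ⟨_, rfl⟩
    rw [← hTdef]
    rw [← hTdef] at hTσ
    have hTH' : T.IsHermitian := hTdef ▸ hTH
    have hApsd : (T * ρ * T).PosSemidef := by
      have := hρ.mul_mul_conjTranspose_same T
      rwa [hTH'.eq] at this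
    have hBpsd : (T * (M * Mᴴ - ρ) * T).PosSemidef := by
      have := hle'.mul_mul_conjTranspose_same T
      rwa [hTH'.eq] at this
    have hsum : T * ρ * T + T * (M * Mᴴ - ρ) * T = 0 := by
      rw [Matrix.mul_sub, Matrix.sub_mul, hTσ, Matrix.zero_mul]
      abel
    have hBA : T * (M * Mᴴ - ρ) * T = -(T * ρ * T) :=
      eq_neg_of_add_eq_zero_right hsum
    have hzero : ∀ x : a → ℂ, dotProduct (star x) ((T * ρ * T) *ᵥ x) = 0 := by
      intro x
      refine le_antisymm ?_ (hApsd.dotProduct_mulVec_nonneg x)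
      have hb := hBpsd.dotProduct_mulVec_nonneg x
      rw [hBA, Matrix.neg_mulVec, dotProduct_neg] at hb
      exact neg_nonneg.mp hb
    ext i j
    have h0 := (hApsd.dotProduct_mulVec_zero_iff (Pi.single j 1)).mp (hzero _)
    have h2 := congr_fun h0 i
    simpa [Matrix.mulVec_single] using h2
  -- T * ρ = 0, hence (M Mᴴ) N ρ = ρ and ρ ((M Mᴴ) N) = ρ
  have hTρ : ((1 : Matrix a a ℂ) - M * Mᴴ * N) * ρ = 0 := by
    obtain ⟨T, hTdef⟩ : ∃ T', T' = (1 : Matrix a a ℂ) - M * Mᴴ * N := ⟨_, rfl⟩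
    rw [← hTdef]
    rw [← hTdef] at hTρT
    have hTH' : T.IsHermitian := hTdef ▸ hTH
    have hRR : (MeasAux.mfun hρ.1 Real.sqrt) * (MeasAux.mfun hρ.1 Real.sqrt) = ρ := by rw [MeasAux.mfun_mul, MeasAux.mfun_congr hρ.1 (g := fun x => x) (fun i => Real.mul_self_sqrt (hρ.eigenvalues_nonneg i)), MeasAux.mfun_id]
    have hRH : (MeasAux.mfun hρ.1 Real.sqrt).IsHermitian := (MeasAux.mfun_posSemidef _ _ (fun i => Real.sqrt_nonneg _)).1
    have h0 : (T * (MeasAux.mfun hρ.1 Real.sqrt)) * (T * (MeasAux.mfun hρ.1 Real.sqrt))ᴴ = 0 := by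
      rw [Matrix.conjTranspose_mul, hRH.eq, hTH'.eq]
      have e : T * (MeasAux.mfun hρ.1 Real.sqrt) * ((MeasAux.mfun hρ.1 Real.sqrt) * T) = T * ((MeasAux.mfun hρ.1 Real.sqrt) * (MeasAux.mfun hρ.1 Real.sqrt)) * T := by
        simp only [Matrix.mul_assoc]
      rw [e, hRR, hTρT]
    have hTR : T * (MeasAux.mfun hρ.1 Real.sqrt) = 0 := Matrix.self_mul_conjTranspose_eq_zero.mp h0
    calc T * ρ = T * (MeasAux.mfun hρ.1 Real.sqrt) * (MeasAux.mfun hρ.1 Real.sqrt) := by rw [Matrix.mul_assoc, hRR]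
    _ = 0 := by rw [hTR, Matrix.zero_mul]
  have hPirho : M * Mᴴ * N * ρ = ρ := by
    rw [Matrix.sub_mul, Matrix.one_mul, sub_eq_zero] at hTρ
    exact hTρ.symm
  have hrhoPi : ρ * (M * Mᴴ * N) = ρ := by
    have h0 := congrArg Matrix.conjTranspose hPirho
    rwa [Matrix.conjTranspose_mul, hρ.1.eq, hPiH.eq] at h0
  -- generalized (right-associated) forms
  have genNσN : ∀ Y : Matrix a b ℂ, N * (M * (Mᴴ * (N * Y))) = N * Y := by
    intro Y
    have := congrArg (fun Z => Z * Y) i2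
    simpa only [Matrix.mul_assoc] using this
  have genPirho : ∀ Y : Matrix a a ℂ, M * (Mᴴ * (N * (ρ * Y))) = ρ * Y := by
    intro Y
    have := congrArg (fun Z => Z * Y) hPirho
    simpa only [Matrix.mul_assoc] using this
  have i3' : N * (M * Mᴴ) = M * (Mᴴ * N) := by
    simpa only [Matrix.mul_assoc] using i3
  have hrhoPi' : ρ * (M * (Mᴴ * N)) = ρ := by
    simpa only [Matrix.mul_assoc] using hrhoPi
  -- the operator X on B and its properties
  have hXpsd : ((N * M)ᴴ * ρ * (N * M)).PosSemidef := hρ.conjTranspose_mul_mul_same (N * M)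
  have hNMH : (N * M)ᴴ = Mᴴ * N := by
    rw [Matrix.conjTranspose_mul, hNpsd.1.eq]
  have hQσ : (N * M)ᴴ * (M * Mᴴ) * (N * M) = Mᴴ * (N * M) := by
    rw [hNMH]
    simp only [Matrix.mul_assoc]
    rw [genNσN M]
  have hQX : (Mᴴ * (N * M) - (N * M)ᴴ * ρ * (N * M)).PosSemidef := by
    have h0 := hle'.conjTranspose_mul_mul_same (N * M)
    have e : (N * M)ᴴ * (M * Mᴴ - ρ) * (N * M)
        = Mᴴ * (N * M) - (N * M)ᴴ * ρ * (N * M) := by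
      rw [Matrix.mul_sub, Matrix.sub_mul, hQσ]
    rwa [e] at h0
  have hQH : (Mᴴ * (N * M))ᴴ = Mᴴ * (N * M) := by
    rw [Matrix.conjTranspose_mul, Matrix.conjTranspose_mul, hNpsd.1.eq,
      Matrix.conjTranspose_conjTranspose]
    simp only [Matrix.mul_assoc]
  have hQidem : (Mᴴ * (N * M)) * (Mᴴ * (N * M)) = Mᴴ * (N * M) := by
    simp only [Matrix.mul_assoc]
    rw [genNσN M]
  have h1Q : ((1 : Matrix b b ℂ) - Mᴴ * (N * M)).PosSemidef := by
    have hRH : ((1 : Matrix b b ℂ) - Mᴴ * (N * M))ᴴ = 1 - Mᴴ * (N * M) := by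
      rw [Matrix.conjTranspose_sub, hQH, Matrix.conjTranspose_one]
    have hRmul : ((1 : Matrix b b ℂ) - Mᴴ * (N * M)) * ((1 : Matrix b b ℂ) - Mᴴ * (N * M))
        = 1 - Mᴴ * (N * M) := by
      rw [Matrix.mul_sub, Matrix.sub_mul, Matrix.sub_mul, hQidem]
      simp only [Matrix.mul_one, Matrix.one_mul]
      abel
    have := Matrix.posSemidef_conjTranspose_mul_self ((1 : Matrix b b ℂ) - Mᴴ * (N * M))
    rwa [hRH, hRmul] at this
  have h1X : ((1 : Matrix b b ℂ) - (N * M)ᴴ * ρ * (N * M)).PosSemidef := by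
    have := h1Q.add hQX
    rwa [sub_add_sub_cancel] at this
  -- transpose and take the square root
  have hXt : ((N * M)ᴴ * ρ * (N * M))ᵀ.PosSemidef := hXpsd.transpose
  have h1Xt : ((1 : Matrix b b ℂ) - ((N * M)ᴴ * ρ * (N * M))ᵀ).PosSemidef := by
    have := h1X.transpose
    rwa [Matrix.transpose_sub, Matrix.transpose_one] at this
  obtain ⟨P, hP1, hP2, hPP⟩ := MeasAux.exists_sqrt_le_one hXt h1Xt
  refine ⟨P, hP1, hP2, ?_⟩
  rw [ptrace_kron_vecMulVec (fun p => ψ p) P, ← hMdef, hPP, Matrix.transpose_transpose, hNMH]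
  simp only [Matrix.mul_assoc]
  rw [genPirho, i3', hrhoPi']
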